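/- Let p > 1, δ > 0, C₀ > 0 and 0 < R₁ < R̃ ≤ ∞. Suppose Y : [R₁, R̃) → [0,∞) is differentiable, nondecreasing, and satisfies (δ + (log 2) Y(R))^p ≤ C₀^p R Y'(R) for every R ∈ [R₁, R̃). Then for every R ∈ [R₁, R̃) one has log(R/R₁) ≤ ((p−1) log 2)^{−1} C₀^p δ^{−(p−1)}; in particular R̃ is finite and R̃ ≤ R₁ exp(((p−1) log 2)^{−1} C₀^p δ^{−(p−1)}). -/

import Mathlib

open Filter

/-- Core differential inequality (case `θ = 0`) behind the test-function lemma.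
If `Y : [R₁, R̃) → [0,∞)` is differentiable, nondecreasing and satisfies
`(δ + (log 2) Y(R))^p ≤ C₀^p R Y'(R)` on `[R₁, R̃)`, then
`log(R/R₁) ≤ ((p−1) log 2)⁻¹ C₀^p δ^{−(p−1)}` for all `R ∈ [R₁, R̃)`;
in particular `R̃` is finite and
`R̃ ≤ R₁ exp(((p−1) log 2)⁻¹ C₀^p δ^{−(p−1)})`. -/
theorem stmt_9 (p δ C₀ R₁ : ℝ) (hp : 1 < p) (hδ : 0 < δ)
    (hC₀ : 0 < C₀) (hR₁ : 0 < R₁) (Rt : EReal) (hRt : (R₁ : EReal) < Rt)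
    (Y : ℝ → ℝ)
    (hY0 : ∀ R : ℝ, R₁ ≤ R → (R : EReal) < Rt → 0 ≤ Y R)
    (hYd : ∀ R : ℝ, R₁ ≤ R → (R : EReal) < Rt → DifferentiableAt ℝ Y R)
    (hYmono : ∀ R S : ℝ, R₁ ≤ R → R ≤ S → (S : EReal) < Rt → Y R ≤ Y S)
    (hYineq : ∀ R : ℝ, R₁ ≤ R → (R : EReal) < Rt →
      (δ + Real.log 2 * Y R) ^ p ≤ C₀ ^ p * R * deriv Y R) :
    (∀ R : ℝ, R₁ ≤ R → (R : EReal) < Rt →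
      Real.log (R / R₁) ≤ ((p - 1) * Real.log 2)⁻¹ * C₀ ^ p * δ ^ (-(p - 1))) ∧
    Rt ≠ ⊤ ∧
    Rt.toReal ≤ R₁ * Real.exp (((p - 1) * Real.log 2)⁻¹ * C₀ ^ p * δ ^ (-(p - 1))) := by
  have hlog2 : (0:ℝ) < Real.log 2 := Real.log_pos (by norm_num)
  have hp1 : (0:ℝ) < p - 1 := by linarith
  have hCp : (0:ℝ) < C₀ ^ p := Real.rpow_pos_of_pos hC₀ p
  set K : ℝ := ((p - 1) * Real.log 2)⁻¹ * C₀ ^ p * δ ^ (-(p - 1)) with hK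
  have hKpos : 0 < K := by
    apply mul_pos (mul_pos (inv_pos.mpr (mul_pos hp1 hlog2)) hCp)
    exact Real.rpow_pos_of_pos hδ _
  -- Z, the auxiliary function F
  set Z : ℝ → ℝ := fun x => δ + Real.log 2 * Y x with hZ
  set F : ℝ → ℝ := fun x => (Real.log 2 / C₀ ^ p) * Real.log x
      + Z x ^ (-(p - 1)) / (p - 1) with hF
  have hZpos : ∀ x : ℝ, R₁ ≤ x → (x : EReal) < Rt → 0 < Z x := fun x h1 h2 => by
    have := hY0 x h1 h2
    have : 0 ≤ Real.log 2 * Y x := mul_nonneg hlog2.le this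
    simp only [hZ]; linarith
  -- F has nonpositive derivative on the relevant range
  have hFderiv : ∀ x : ℝ, R₁ ≤ x → (x : EReal) < Rt →
      HasDerivAt F ((Real.log 2 / C₀ ^ p) * x⁻¹
        + Real.log 2 * deriv Y x * (-(p - 1)) * Z x ^ (-(p - 1) - 1) / (p - 1)) x := by
    intro x h1 h2
    have hx0 : (0:ℝ) < x := lt_of_lt_of_le hR₁ h1
    have hYx : HasDerivAt Y (deriv Y x) x := (hYd x h1 h2).hasDerivAt
    have hZx : HasDerivAt Z (Real.log 2 * deriv Y x) x := by
      exact (hYx.const_mul (Real.log 2)).const_add δ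
    have hlogx : HasDerivAt (fun y => (Real.log 2 / C₀ ^ p) * Real.log y)
        ((Real.log 2 / C₀ ^ p) * x⁻¹) x :=
      (Real.hasDerivAt_log hx0.ne').const_mul _
    have hpow : HasDerivAt (fun y => Z y ^ (-(p - 1)) / (p - 1))
        (Real.log 2 * deriv Y x * (-(p - 1)) * Z x ^ (-(p - 1) - 1) / (p - 1)) x := by
      exact (hZx.rpow_const (Or.inl (hZpos x h1 h2).ne')).div_const _
    have hadd := hlogx.add hpow
    simp only [hF]
    exact hadd
  have hFnonpos : ∀ x : ℝ, R₁ ≤ x → (x : EReal) < Rt →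
      (Real.log 2 / C₀ ^ p) * x⁻¹
        + Real.log 2 * deriv Y x * (-(p - 1)) * Z x ^ (-(p - 1) - 1) / (p - 1) ≤ 0 := by
    intro x h1 h2
    have hx0 : (0:ℝ) < x := lt_of_lt_of_le hR₁ h1
    have hZx := hZpos x h1 h2
    have hZp : (0:ℝ) < Z x ^ p := Real.rpow_pos_of_pos hZx p
    have hineq := hYineq x h1 h2
    have hu : 0 < deriv Y x := by
      by_contra h
      push_neg at h
      have : C₀ ^ p * x * deriv Y x ≤ 0 :=
        mul_nonpos_of_nonneg_of_nonpos (le_of_lt (mul_pos hCp hx0)) h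
      have := hZp.trans_le hineq
      linarith
    have key : Real.log 2 / (C₀ ^ p * x) ≤ Real.log 2 * deriv Y x / Z x ^ p := by
      rw [div_le_div_iff₀ (mul_pos hCp hx0) hZp]
      calc Real.log 2 * Z x ^ p ≤ Real.log 2 * (C₀ ^ p * x * deriv Y x) := by
            exact mul_le_mul_of_nonneg_left hineq hlog2.le
        _ = Real.log 2 * deriv Y x * (C₀ ^ p * x) := by ring
    have hZnegp : Z x ^ (-(p - 1) - 1) = (Z x ^ p)⁻¹ := by
      rw [show -(p - 1) - 1 = -p by ring, Real.rpow_neg hZx.le]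
    rw [hZnegp]
    have heq : Real.log 2 * deriv Y x * (-(p - 1)) * (Z x ^ p)⁻¹ / (p - 1)
        = -(Real.log 2 * deriv Y x / Z x ^ p) := by
      field_simp
    rw [heq]
    have : (Real.log 2 / C₀ ^ p) * x⁻¹ = Real.log 2 / (C₀ ^ p * x) := by
      field_simp
    rw [this]
    linarith
  -- main estimate
  have main : ∀ R : ℝ, R₁ ≤ R → (R : EReal) < Rt → Real.log (R / R₁) ≤ K := by
    intro R hR1 hR2
    rcases eq_or_lt_of_le hR1 with rfl | hlt
    · simp [div_self hR₁.ne']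
      exact hKpos.le
    · -- F antitone on [R₁, R]
      have hmem : ∀ x ∈ Set.Icc R₁ R, R₁ ≤ x ∧ (x : EReal) < Rt := by
        intro x hx
        refine ⟨hx.1, lt_of_le_of_lt ?_ hR2⟩
        exact_mod_cast EReal.coe_le_coe_iff.mpr hx.2
      have hanti : AntitoneOn F (Set.Icc R₁ R) := by
        apply antitoneOn_of_deriv_nonpos (convex_Icc R₁ R)
        · intro x hx
          obtain ⟨h1, h2⟩ := hmem x hx
          exact (hFderiv x h1 h2).differentiableAt.continuousAt.continuousWithinAt
        · intro x hx
          rw [interior_Icc] at hx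
          obtain ⟨h1, h2⟩ := hmem x ⟨hx.1.le, hx.2.le⟩
          exact (hFderiv x h1 h2).differentiableAt.differentiableWithinAt
        · intro x hx
          rw [interior_Icc] at hx
          obtain ⟨h1, h2⟩ := hmem x ⟨hx.1.le, hx.2.le⟩
          rw [(hFderiv x h1 h2).deriv]
          exact hFnonpos x h1 h2
      have hFRR1 : F R ≤ F R₁ :=
        hanti (Set.left_mem_Icc.mpr hlt.le) (Set.right_mem_Icc.mpr hlt.le) hlt.le
      have hR0 : (0:ℝ) < R := lt_trans hR₁ hlt
      have hZR1 : δ ≤ Z R₁ := by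
        have := hY0 R₁ le_rfl hRt
        have : 0 ≤ Real.log 2 * Y R₁ := mul_nonneg hlog2.le this
        simp only [hZ]; linarith
      have hZR : 0 < Z R := hZpos R hR1 hR2
      have hZR1le : Z R₁ ^ (-(p - 1)) ≤ δ ^ (-(p - 1)) :=
        Real.rpow_le_rpow_of_nonpos hδ hZR1 (by linarith)
      have hZRnn : 0 ≤ Z R ^ (-(p - 1)) := (Real.rpow_pos_of_pos hZR _).le
      -- unfold F inequality
      have hF1 : (Real.log 2 / C₀ ^ p) * Real.log R + Z R ^ (-(p - 1)) / (p - 1)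
          ≤ (Real.log 2 / C₀ ^ p) * Real.log R₁ + Z R₁ ^ (-(p - 1)) / (p - 1) := hFRR1
      have hstep : (Real.log 2 / C₀ ^ p) * (Real.log R - Real.log R₁)
          ≤ δ ^ (-(p - 1)) / (p - 1) := by
        have h1 : Z R₁ ^ (-(p - 1)) / (p - 1) ≤ δ ^ (-(p - 1)) / (p - 1) :=
          by gcongr
        have h2 : 0 ≤ Z R ^ (-(p - 1)) / (p - 1) := div_nonneg hZRnn hp1.le
        nlinarith
      rw [Real.log_div hR0.ne' hR₁.ne']
      have hfinal : Real.log R - Real.log R₁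
          ≤ (C₀ ^ p / Real.log 2) * (δ ^ (-(p - 1)) / (p - 1)) := by
        rw [div_mul_eq_mul_div, le_div_iff₀ hlog2]
        calc (Real.log R - Real.log R₁) * Real.log 2
            = ((Real.log 2 / C₀ ^ p) * (Real.log R - Real.log R₁)) * C₀ ^ p := by
              field_simp
          _ ≤ (δ ^ (-(p - 1)) / (p - 1)) * C₀ ^ p :=
              mul_le_mul_of_nonneg_right hstep hCp.le
          _ = C₀ ^ p * (δ ^ (-(p - 1)) / (p - 1)) := by ring
      calc Real.log R - Real.log R₁
          ≤ (C₀ ^ p / Real.log 2) * (δ ^ (-(p - 1)) / (p - 1)) := hfinal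
        _ = K := by rw [hK]; field_simp
  refine ⟨main, ?_, ?_⟩
  · -- Rt ≠ ⊤
    intro htop
    set R : ℝ := max R₁ (R₁ * Real.exp K + 1) with hR
    have h1 : R₁ ≤ R := le_max_left _ _
    have h2 : (R : EReal) < Rt := by rw [htop]; exact EReal.coe_lt_top R
    have := main R h1 h2
    have hR0 : 0 < R := lt_of_lt_of_le hR₁ h1
    have hle : R ≤ R₁ * Real.exp K := by
      have hdiv : R / R₁ ≤ Real.exp K :=
        (Real.log_le_iff_le_exp (div_pos hR0 hR₁)).mp this
      calc R = (R / R₁) * R₁ := by field_simp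
        _ ≤ Real.exp K * R₁ := mul_le_mul_of_nonneg_right hdiv hR₁.le
        _ = R₁ * Real.exp K := by ring
    have : R₁ * Real.exp K + 1 ≤ R := le_max_right _ _
    linarith
  · -- Rt.toReal ≤ R₁ * exp K
    have hnetop : Rt ≠ ⊤ := by
      intro htop
      set R : ℝ := max R₁ (R₁ * Real.exp K + 1) with hR
      have h1 : R₁ ≤ R := le_max_left _ _
      have h2 : (R : EReal) < Rt := by rw [htop]; exact EReal.coe_lt_top R
      have := main R h1 h2
      have hR0 : 0 < R := lt_of_lt_of_le hR₁ h1
      have hle : R ≤ R₁ * Real.exp K := by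
        have hdiv : R / R₁ ≤ Real.exp K :=
          (Real.log_le_iff_le_exp (div_pos hR0 hR₁)).mp this
        calc R = (R / R₁) * R₁ := by field_simp
          _ ≤ Real.exp K * R₁ := mul_le_mul_of_nonneg_right hdiv hR₁.le
          _ = R₁ * Real.exp K := by ring
      have : R₁ * Real.exp K + 1 ≤ R := le_max_right _ _
      linarith
    have hnebot : Rt ≠ ⊥ := (lt_of_lt_of_le (bot_lt_iff_ne_bot.mpr (by simp)) hRt.le).ne'
    set t : ℝ := Rt.toReal with ht
    have hcoe : (t : EReal) = Rt := EReal.coe_toReal hnetop hnebot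
    by_contra hcon
    push_neg at hcon
    set B : ℝ := R₁ * Real.exp K with hB
    have hBR1 : R₁ ≤ B := by
      have : (1:ℝ) ≤ Real.exp K := Real.one_le_exp hKpos.le
      nlinarith
    set R : ℝ := (B + t) / 2 with hRdef
    have h1 : R₁ ≤ R := by
      have : B < R := by simp only [hRdef]; linarith
      linarith
    have h2 : (R : EReal) < Rt := by
      rw [← hcoe]
      exact_mod_cast (by simp only [hRdef]; linarith : R < t)
    have := main R h1 h2
    have hR0 : 0 < R := lt_of_lt_of_le hR₁ h1
    have hle : R ≤ B := by
      have hdiv : R / R₁ ≤ Real.exp K :=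
        (Real.log_le_iff_le_exp (div_pos hR0 hR₁)).mp this
      calc R = (R / R₁) * R₁ := by field_simp
        _ ≤ Real.exp K * R₁ := mul_le_mul_of_nonneg_right hdiv hR₁.le
        _ = B := by rw [hB]; ring
    have : B < R := by simp only [hRdef]; linarith
    linarith
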